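/- In the Brauer setting, two elements of A^+ are in the same W-orbit, for W = ⟨(i,j), (i,j)_− : i ≠ j⟩ acting on sequences by place permutations and sign-changing transpositions, if and only if one is obtained from the other by a finite sequence of moves each of which either swaps a ∨ and a ∧ or replaces two ∨'s by two ∧'s (or vice versa), where a ⋄ (the symbol at value 0, if present) may play the role of either ∨ or ∧. -/

import Mathlib

/-- The four labels `∘, ×, ∨, ∧`. -/
inductive Lbl : Type
  | circ | times | vee | wedge
  deriving DecidableEq

/-- The five labels `∘, ×, ∨, ∧, ⋄` of Brauer weight diagrams. -/
inductive BLbl : Type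
  | circ | times | vee | wedge | diam
  deriving DecidableEq

/-- Membership of `x` in `A⁺` for the Brauer algebra: a strictly decreasing
sequence with all entries in `ℤ` or all in `ℤ + 1/2`. -/
def BAplus (x : ℕ → ℚ) : Prop :=
  StrictAnti x ∧
    ((∀ i, ∃ k : ℤ, x i = k) ∨ (∀ i, ∃ k : ℤ, x i = k + 1 / 2))

/-- `I_∧(x) = {x_i : x_i > 0}`. -/
def BIwedge (x : ℕ → ℚ) : Set ℚ := {v | 0 < v ∧ ∃ i, x i = v}

/-- `I_∨(x) = {−x_i : x_i < 0}`. -/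
def BIvee (x : ℕ → ℚ) : Set ℚ := {v | 0 < v ∧ ∃ i, x i = -v}

open Classical in
/-- The Brauer weight diagram of `x`: vertex `n` (in `ℕ ∪ {0}` or `ℕ − 1/2`)
is labelled `∘`, `×`, `∨`, `∧` or `⋄` according to the membership of `n` in
`I_∨(x)` and `I_∧(x)`, with `⋄` at `0` when `0` is an entry of `x`. -/
noncomputable def bdiagram (x : ℕ → ℚ) : ℚ → BLbl := fun n =>
  if n = 0 ∧ ∃ i, x i = 0 then BLbl.diam
  else if n ∈ BIvee x then (if n ∈ BIwedge x then BLbl.times else BLbl.vee)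
  else (if n ∈ BIwedge x then BLbl.wedge else BLbl.circ)

/-- Resolve the wildcard `⋄` as `∨` (if `c`) or as `∧` (otherwise). -/
def resolve (c : Bool) : BLbl → Lbl
  | BLbl.circ => Lbl.circ
  | BLbl.times => Lbl.times
  | BLbl.vee => Lbl.vee
  | BLbl.wedge => Lbl.wedge
  | BLbl.diam => if c then Lbl.vee else Lbl.wedge

/-- An elementary move between (resolved) diagrams: at two vertices, either
swap a `∨` and a `∧`, or replace two `∨`s by two `∧`s, or two `∧`s by two
`∨`s; all other vertices keep their labels. -/
def MoveStep (e f : ℚ → Lbl) : Prop :=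
  ∃ v w : ℚ, v ≠ w ∧ (∀ u, u ≠ v → u ≠ w → f u = e u) ∧
    ((e v = Lbl.vee ∧ e w = Lbl.wedge ∧ f v = Lbl.wedge ∧ f w = Lbl.vee) ∨
     (e v = Lbl.vee ∧ e w = Lbl.vee ∧ f v = Lbl.wedge ∧ f w = Lbl.wedge) ∨
     (e v = Lbl.wedge ∧ e w = Lbl.wedge ∧ f v = Lbl.vee ∧ f w = Lbl.vee))

/-- An elementary move between elements of `A⁺`, where any `⋄` may play the
role of either `∨` or `∧`. -/
def BMove (x y : ℕ → ℚ) : Prop :=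
  BAplus x ∧ BAplus y ∧
    ∃ c c' : Bool, MoveStep (resolve c ∘ bdiagram x) (resolve c' ∘ bdiagram y)

/-- Orbit of the group `W = ⟨(i,j), (i,j)₋⟩` of finitely supported signed
permutations with an even number of sign changes. -/
def SameWOrbitBrauer (x y : ℕ → ℚ) : Prop :=
  ∃ σ : Equiv.Perm ℕ, ∃ ε : ℕ → ℤ,
    (∀ i, ε i = 1 ∨ ε i = -1) ∧
    {i | σ i ≠ i ∨ ε i ≠ 1}.Finite ∧
    Even {i | ε i = -1}.ncard ∧
    (∀ i, x i = (ε i : ℚ) * y (σ i))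

namespace BW


open Set

lemma ba_inj {x : ℕ → ℚ} (hx : BAplus x) : Function.Injective x :=
  hx.1.injective

lemma ba_grid_sub {x : ℕ → ℚ} (hx : BAplus x) (i j : ℕ) : ∃ k : ℤ, x i - x j = k := by
  rcases hx.2 with h | h
  · obtain ⟨a, ha⟩ := h i; obtain ⟨b, hb⟩ := h j
    exact ⟨a - b, by rw [ha, hb]; push_cast; ring⟩
  · obtain ⟨a, ha⟩ := h i; obtain ⟨b, hb⟩ := h j
    exact ⟨a - b, by rw [ha, hb]; push_cast; ring⟩

lemma ba_step {x : ℕ → ℚ} (hx : BAplus x) (i : ℕ) : x (i + 1) ≤ x i - 1 := by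
  obtain ⟨k, hk⟩ := ba_grid_sub hx i (i + 1)
  have h1 : (0 : ℚ) < x i - x (i + 1) := by
    have := hx.1 (Nat.lt_succ_self i); linarith
  have hk1 : (1 : ℤ) ≤ k := by
    rw [hk] at h1
    exact_mod_cast h1
  have : (1 : ℚ) ≤ x i - x (i + 1) := by rw [hk]; exact_mod_cast hk1
  linarith

lemma ba_le (x : ℕ → ℚ) (hx : BAplus x) (i : ℕ) : x i ≤ x 0 - i := by
  induction i with
  | zero => simp
  | succ n ih =>
      have := ba_step hx n
      push_cast
      linarith

lemma ba_unbounded {x : ℕ → ℚ} (hx : BAplus x) (c : ℚ) : ∃ i, x i < c := by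
  obtain ⟨n, hn⟩ := exists_nat_gt (x 0 - c)
  refine ⟨n, ?_⟩
  have := ba_le x hx n
  linarith

/-- there is `m` with `c ≤ x i ↔ i < m`. -/
lemma ba_find {x : ℕ → ℚ} (hx : BAplus x) (c : ℚ) : ∃ m : ℕ, ∀ i, c ≤ x i ↔ i < m := by
  have hex : ∃ i, x i < c := ba_unbounded hx c
  classical
  refine ⟨Nat.find hex, fun i => ?_⟩
  constructor
  · intro hi
    by_contra h
    push_neg at h
    have : x i ≤ x (Nat.find hex) := hx.1.antitone h
    have := Nat.find_spec hex
    linarith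
  · intro hi
    have := Nat.find_min hex hi
    linarith

lemma rg_fin {x : ℕ → ℚ} (hx : BAplus x) (c : ℚ) : (Set.range x ∩ Set.Ici c).Finite := by
  obtain ⟨m, hm⟩ := ba_find hx c
  have hsub : Set.range x ∩ Set.Ici c ⊆ x '' Set.Iio m := by
    rintro q ⟨⟨i, rfl⟩, hq⟩
    exact ⟨i, (hm i).1 hq, rfl⟩
  exact (Set.Finite.image x (Set.finite_Iio m)).subset hsub

/-- two BAplus sequences agreeing low down (below c) with same number of entries ≥ c
agree from index m on. -/
lemma ba_agree {x y : ℕ → ℚ} (hx : BAplus x) (hy : BAplus y) (c : ℚ) (m : ℕ)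
    (hlow : ∀ q, q < c → (q ∈ Set.range x ↔ q ∈ Set.range y))
    (hmx : ∀ i, c ≤ x i ↔ i < m) (hmy : ∀ i, c ≤ y i ↔ i < m) :
    ∀ i, m ≤ i → x i = y i := by
  intro i
  induction i using Nat.strong_induction_on with
  | _ i IH =>
    intro hi
    have hxc : x i < c := by
      by_contra h; push_neg at h; exact absurd ((hmx i).1 h) (by omega)
    have hmem : x i ∈ Set.range y := (hlow (x i) hxc).1 ⟨i, rfl⟩
    obtain ⟨k, hk⟩ := hmem
    have hkm : m ≤ k := by
      by_contra h; push_neg at h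
      have := (hmy k).2 h
      linarith [hk ▸ this]
    rcases lt_trichotomy k i with hlt | heq | hgt
    · exfalso
      have h1 := IH k hlt hkm
      rw [← h1] at hk
      have : k = i := hx.1.injective hk
      omega
    · rw [heq] at hk; exact hk.symm
    · -- k > i : derive contradiction
      have hyc : y i < c := by
        by_contra h; push_neg at h; exact absurd ((hmy i).1 h) (by omega)
      have hymem : y i ∈ Set.range x := (hlow (y i) hyc).2 ⟨i, rfl⟩
      obtain ⟨t, ht⟩ := hymem
      have hti : t < i := by
        have h1 : y i > y k := hy.1 hgt
        rw [hk] at h1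
        -- x t = y i > x i
        have : x t > x i := by rw [ht]; exact h1
        exact (hx.1.lt_iff_gt).1 this
      have htm : m ≤ t := by
        by_contra h; push_neg at h
        have := (hmx t).1
        have h2 : c ≤ x t := (hmx t).2 h
        rw [ht] at h2; linarith
      have := IH t hti htm
      rw [this] at ht
      have : t = i := hy.1.injective ht
      omega


open Set

/-- Sets that can be enumerated decreasingly. -/
def Good (T : Set ℚ) : Prop :=
  (∀ c, (T ∩ Set.Ici c).Finite) ∧ (∀ c, (T ∩ Set.Iio c).Nonempty)

lemma good_greatest {T : Set ℚ} (hT : Good T) : ∃ g, g ∈ T ∧ ∀ u ∈ T, u ≤ g := by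
  obtain ⟨t0, ht0, _⟩ := hT.2 0
  have hfin : (T ∩ Set.Ici t0).Finite := hT.1 t0
  have hne : (T ∩ Set.Ici t0).Nonempty := ⟨t0, ht0, Set.mem_Ici.mpr (le_refl _)⟩
  obtain ⟨g, hg, hmax⟩ := Set.Finite.exists_maximalFor id _ hfin hne
  refine ⟨g, hg.1, fun u hu => ?_⟩
  by_cases h : t0 ≤ u
  · by_contra hlt
    push_neg at hlt
    have := hmax ⟨hu, Set.mem_Ici.mpr h⟩ (le_of_lt hlt)
    simp only [id] at this
    exact absurd this (not_le.2 hlt)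
  · push_neg at h
    calc u ≤ t0 := le_of_lt h
    _ ≤ g := hg.2

lemma good_inter_Iio {T : Set ℚ} (hT : Good T) (t : ℚ) : Good (T ∩ Set.Iio t) := by
  constructor
  · intro c
    exact (hT.1 c).subset (by intro q hq; exact ⟨hq.1.1, hq.2⟩)
  · intro c
    obtain ⟨q, hq1, hq2⟩ := hT.2 (min c t)
    exact ⟨q, ⟨⟨hq1, Set.mem_Iio.mpr (lt_of_lt_of_le hq2 (min_le_right _ _))⟩,
      Set.mem_Iio.mpr (lt_of_lt_of_le hq2 (min_le_left _ _))⟩⟩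

open Classical in
noncomputable def gr (T : Set ℚ) : ℚ :=
  if h : ∃ g, g ∈ T ∧ ∀ u ∈ T, u ≤ g then h.choose else 0

lemma gr_spec {T : Set ℚ} (h : ∃ g, g ∈ T ∧ ∀ u ∈ T, u ≤ g) :
    gr T ∈ T ∧ ∀ u ∈ T, u ≤ gr T := by
  rw [gr, dif_pos h]
  exact h.choose_spec

noncomputable def enum (T : Set ℚ) : ℕ → ℚ
  | 0 => gr T
  | n + 1 => gr (T ∩ Set.Iio (enum T n))

lemma enum_zero_spec {T : Set ℚ} (hT : Good T) :
    enum T 0 ∈ T ∧ ∀ u ∈ T, u ≤ enum T 0 := by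
  have := gr_spec (good_greatest hT)
  exact this

lemma enum_succ_spec {T : Set ℚ} (hT : Good T) (hn : enum T n ∈ T) :
    enum T (n + 1) ∈ T ∧ enum T (n + 1) < enum T n ∧
      ∀ u ∈ T, u < enum T n → u ≤ enum T (n + 1) := by
  have h := gr_spec (good_greatest (good_inter_Iio hT (enum T n)))
  refine ⟨h.1.1, h.1.2, fun u hu hu2 => h.2 u ⟨hu, hu2⟩⟩

lemma enum_mem {T : Set ℚ} (hT : Good T) : ∀ n, enum T n ∈ T := by
  intro n
  induction n with
  | zero => exact (enum_zero_spec hT).1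
  | succ n ih => exact (enum_succ_spec hT ih).1

lemma enum_strictAnti {T : Set ℚ} (hT : Good T) : StrictAnti (enum T) := by
  apply strictAnti_nat_of_succ_lt
  intro n
  exact (enum_succ_spec hT (enum_mem hT n)).2.1

lemma enum_greatest_below {T : Set ℚ} (hT : Good T) (n : ℕ) :
    ∀ u ∈ T, u < enum T n → u ≤ enum T (n + 1) :=
  (enum_succ_spec hT (enum_mem hT n)).2.2

lemma enum_range {T : Set ℚ} (hT : Good T) : Set.range (enum T) = T := by
  apply Set.eq_of_subset_of_subset
  · rintro q ⟨n, rfl⟩; exact enum_mem hT n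
  · -- every t ∈ T equals enum T k where k = (T ∩ Ioi t).ncard
    have key : ∀ k : ℕ, ∀ t ∈ T, (T ∩ Set.Ioi t).ncard = k → t = enum T k := by
      intro k
      induction k with
      | zero =>
          intro t ht hcard
          have hfin : (T ∩ Set.Ioi t).Finite :=
            (hT.1 t).subset (fun q hq => ⟨hq.1, Set.mem_Ici.2 (le_of_lt hq.2)⟩)
          have hempty : T ∩ Set.Ioi t = ∅ := (Set.ncard_eq_zero hfin).1 hcard
          -- t is the greatest element
          have hgr : ∀ u ∈ T, u ≤ t := by
            intro u hu
            by_contra h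
            push_neg at h
            have hmem : u ∈ T ∩ Set.Ioi t := ⟨hu, h⟩
            rw [hempty] at hmem
            exact hmem
          have h0 := enum_zero_spec hT
          exact le_antisymm (h0.2 t ht) (hgr _ h0.1)
      | succ k IH =>
          intro t ht hcard
          have hfin : (T ∩ Set.Ioi t).Finite :=
            (hT.1 t).subset (fun q hq => ⟨hq.1, Set.mem_Ici.2 (le_of_lt hq.2)⟩)
          have hne : (T ∩ Set.Ioi t).Nonempty := by
            rw [Set.nonempty_iff_ne_empty]
            intro h
            rw [h] at hcard
            simp at hcard
          obtain ⟨t', ht', hmin⟩ := Set.exists_min_image _ id hfin hne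
          have heq : T ∩ Set.Ioi t' = (T ∩ Set.Ioi t) \ {t'} := by
            apply Set.eq_of_subset_of_subset
            · rintro u ⟨hu, hu2⟩
              refine ⟨⟨hu, Set.mem_Ioi.2 (lt_trans ht'.2 hu2)⟩, ?_⟩
              simp only [Set.mem_singleton_iff]
              exact ne_of_gt hu2
            · rintro u ⟨⟨hu, hu2⟩, hu3⟩
              simp only [Set.mem_singleton_iff] at hu3
              have := hmin u ⟨hu, hu2⟩
              simp only [id] at this
              exact ⟨hu, lt_of_le_of_ne this (Ne.symm hu3)⟩
          have hcard' : (T ∩ Set.Ioi t').ncard = k := by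
            rw [heq, Set.ncard_diff_singleton_of_mem ht', hcard]
            simp
          have ht'e : t' = enum T k := IH t' ht'.1 hcard'
          -- now t is the greatest element of T below t'
          have h1 : t ≤ enum T (k+1) := by
            apply enum_greatest_below hT k t ht
            rw [← ht'e]; exact ht'.2
          have h2 : enum T (k+1) ≤ t := by
            by_contra h
            push_neg at h
            have hm : enum T (k+1) ∈ T ∩ Set.Ioi t := ⟨enum_mem hT _, h⟩
            have h3 := hmin _ hm
            simp only [id] at h3
            have hlt : enum T (k+1) < t' := by
              rw [ht'e]; exact enum_strictAnti hT (Nat.lt_succ_self k)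
            linarith
          exact le_antisymm h1 h2
    intro t ht
    have hfin : (T ∩ Set.Ioi t).Finite :=
      (hT.1 t).subset (fun q hq => ⟨hq.1, Set.mem_Ici.2 (le_of_lt hq.2)⟩)
    exact ⟨_, (key _ t ht rfl).symm⟩


open Set

noncomputable def flip (S : Finset ℚ) (q : ℚ) : ℚ := if |q| ∈ S then -q else q

lemma flip_abs (S : Finset ℚ) (q : ℚ) : |flip S q| = |q| := by
  unfold flip; split_ifs <;> simp

lemma flip_invol (S : Finset ℚ) (q : ℚ) : flip S (flip S q) = q := by
  unfold flip
  split_ifs with h1 h2 h2 <;> simp_all [abs_neg]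

lemma flip_inj (S : Finset ℚ) : Function.Injective (flip S) := by
  intro a b h
  have := congrArg (flip S) h
  rwa [flip_invol, flip_invol] at this

lemma flip_zero (S : Finset ℚ) : flip S 0 = 0 := by
  unfold flip; split_ifs <;> simp

lemma flip_eq_of_not_mem {S : Finset ℚ} {q : ℚ} (h : |q| ∉ S) : flip S q = q := if_neg h

lemma flip_eq_neg {S : Finset ℚ} {q : ℚ} (h : |q| ∈ S) : flip S q = -q := if_pos h


/-- flip-correspondence of ranges. -/
def FlipCorr (x y : ℕ → ℚ) (S : Finset ℚ) : Prop :=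
  (∀ v ∈ S, 0 < v) ∧ (∀ q, q ∈ Set.range x ↔ flip S q ∈ Set.range y)

lemma flipcorr_agree {x y : ℕ → ℚ} {S : Finset ℚ} (hx : BAplus x) (hy : BAplus y)
    (h : FlipCorr x y S) :
    ∃ N, ∀ i, N ≤ i → x i = y i ∧ flip S (x i) = x i := by
  obtain ⟨M, hM⟩ := S.bddAbove
  set c : ℚ := -|M| - 1 with hc
  have hkey : ∀ q : ℚ, q < c → flip S q = q := by
    intro q hq
    apply flip_eq_of_not_mem
    intro hmem
    have h1 : |q| ≤ M := hM hmem
    have h2 : (0:ℚ) ≤ |q| := abs_nonneg q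
    have h3 : M ≤ |M| := le_abs_self M
    have h4 : q < 0 := by linarith
    rw [abs_of_neg h4] at h1 h2
    linarith
  have hflipc : ∀ q : ℚ, |q| ∈ S → c < flip S q ∧ c < q := by
    intro q hq
    rw [flip_eq_neg hq]
    have h1 : |q| ≤ M := hM hq
    have h3 : M ≤ |M| := le_abs_self M
    have h4 : -|q| ≤ q := neg_abs_le q
    have h5 : -|q| ≤ -q := by rw [neg_le_neg_iff]; exact le_abs_self q
    constructor <;> [linarith; linarith]
  have hlow : ∀ q, q < c → (q ∈ Set.range x ↔ q ∈ Set.range y) := by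
    intro q hq
    rw [h.2 q, hkey q hq]
  obtain ⟨mx, hmx⟩ := ba_find hx c
  obtain ⟨my, hmy⟩ := ba_find hy c
  have himg : flip S '' (Set.range x ∩ Set.Ici c) = Set.range y ∩ Set.Ici c := by
    apply Set.eq_of_subset_of_subset
    · rintro r ⟨q, ⟨hq1, hq2⟩, rfl⟩
      refine ⟨(h.2 q).1 hq1, ?_⟩
      by_cases hm : |q| ∈ S
      · exact le_of_lt (hflipc q hm).1
      · rw [flip_eq_of_not_mem hm]; exact hq2
    · rintro r ⟨hr1, hr2⟩
      refine ⟨flip S r, ⟨?_, ?_⟩, flip_invol S r⟩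
      · rw [h.2 (flip S r), flip_invol]; exact hr1
      · by_cases hm : |r| ∈ S
        · exact le_of_lt (hflipc r hm).1
        · rw [flip_eq_of_not_mem hm]; exact hr2
  have hximg : Set.range x ∩ Set.Ici c = x '' Set.Iio mx := by
    apply Set.eq_of_subset_of_subset
    · rintro q ⟨⟨i, rfl⟩, hq⟩
      exact ⟨i, (hmx i).1 hq, rfl⟩
    · rintro q ⟨i, hi, rfl⟩
      exact ⟨⟨i, rfl⟩, (hmx i).2 hi⟩
  have hyimg : Set.range y ∩ Set.Ici c = y '' Set.Iio my := by
    apply Set.eq_of_subset_of_subset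
    · rintro q ⟨⟨i, rfl⟩, hq⟩
      exact ⟨i, (hmy i).1 hq, rfl⟩
    · rintro q ⟨i, hi, rfl⟩
      exact ⟨⟨i, rfl⟩, (hmy i).2 hi⟩
  have hiio : ∀ m : ℕ, (Set.Iio m).ncard = m := by
    intro m
    have : (Set.Iio m) = ↑(Finset.range m) := by ext j; simp
    rw [this, Set.ncard_coe_finset, Finset.card_range]
  have hmm : mx = my := by
    have e1 : (Set.range x ∩ Set.Ici c).ncard = mx := by
      rw [hximg, Set.ncard_image_of_injective _ (ba_inj hx), hiio]
    have e2 : (Set.range y ∩ Set.Ici c).ncard = my := by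
      rw [hyimg, Set.ncard_image_of_injective _ (ba_inj hy), hiio]
    have e3 : (flip S '' (Set.range x ∩ Set.Ici c)).ncard = (Set.range x ∩ Set.Ici c).ncard :=
      Set.ncard_image_of_injective _ (flip_inj S)
    rw [himg, e2, e1] at e3
    exact e3.symm
  refine ⟨mx, fun i hi => ?_⟩
  have hagree := ba_agree hx hy c mx hlow hmx (hmm ▸ hmy) i hi
  refine ⟨hagree, ?_⟩
  apply hkey
  by_contra hcon
  push_neg at hcon
  exact absurd ((hmx i).1 hcon) (by omega)

lemma orb'_of_flipcorr {x y : ℕ → ℚ} {S : Finset ℚ} (hx : BAplus x) (hy : BAplus y)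
    (h : FlipCorr x y S) :
    ∃ σ : Equiv.Perm ℕ, ∃ ε : ℕ → ℤ,
      (∀ i, ε i = 1 ∨ ε i = -1) ∧
      {i | σ i ≠ i ∨ ε i ≠ 1}.Finite ∧
      (∀ i, (x i : ℚ) = (ε i : ℚ) * y (σ i)) ∧
      {i | ε i = -1} = {i | flip S (x i) ≠ x i} := by
  classical
  have hF : ∀ i, ∃ j, y j = flip S (x i) := fun i => (h.2 (x i)).1 ⟨i, rfl⟩
  have hG : ∀ j, ∃ i, x i = flip S (y j) := by
    intro j
    have : flip S (flip S (y j)) ∈ Set.range y := by rw [flip_invol]; exact ⟨j, rfl⟩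
    exact (h.2 (flip S (y j))).2 this
  set F : ℕ → ℕ := fun i => (hF i).choose with hFdef
  set G : ℕ → ℕ := fun j => (hG j).choose with hGdef
  have hFs : ∀ i, y (F i) = flip S (x i) := fun i => (hF i).choose_spec
  have hGs : ∀ j, x (G j) = flip S (y j) := fun j => (hG j).choose_spec
  have hGF : ∀ i, G (F i) = i := by
    intro i
    apply ba_inj hx
    rw [hGs (F i), hFs i, flip_invol]
  have hFG : ∀ j, F (G j) = j := by
    intro j
    apply ba_inj hy
    rw [hFs (G j), hGs j, flip_invol]
  set σ : Equiv.Perm ℕ := ⟨F, G, hGF, hFG⟩ with hσ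
  set ε : ℕ → ℤ := fun i => if flip S (x i) = x i then 1 else -1 with hε
  have hεs : ∀ i, ε i = 1 ∨ ε i = -1 := by
    intro i; rw [hε]; dsimp only; split_ifs <;> simp
  have heq : ∀ i, (x i : ℚ) = (ε i : ℚ) * y (σ i) := by
    intro i
    have hy1 : y (σ i) = flip S (x i) := hFs i
    rw [hε]; dsimp only
    split_ifs with hfl
    · rw [hy1, hfl]; push_cast; ring
    · have : flip S (x i) = -(x i) := by
        by_cases hm : |x i| ∈ S
        · exact flip_eq_neg hm
        · exact absurd (flip_eq_of_not_mem hm) hfl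
      rw [hy1, this]; push_cast; ring
  obtain ⟨N, hN⟩ := flipcorr_agree hx hy h
  have hsupp : {i | σ i ≠ i ∨ ε i ≠ 1} ⊆ Set.Iio N := by
    intro i hi
    simp only [Set.mem_Iio]
    by_contra hcon
    push_neg at hcon
    obtain ⟨h1, h2⟩ := hN i hcon
    have hσi : σ i = i := by
      apply ba_inj hy
      show y (F i) = y i
      rw [hFs i, h2, h1]
    have hεi : ε i = 1 := by rw [hε]; dsimp only; rw [if_pos h2]
    rcases hi with hbad | hbad
    · exact hbad hσi
    · exact hbad hεi
  refine ⟨σ, ε, hεs, (Set.finite_Iio N).subset hsupp, heq, ?_⟩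
  ext i
  simp only [Set.mem_setOf_eq, hε]
  split_ifs with hfl
  · simp [hfl]
  · simp [hfl]

lemma finite_bound {K : Set ℕ} (h : K.Finite) : ∃ N, ∀ i ∈ K, i < N := by
  refine ⟨h.toFinset.sup id + 1, fun i hi => ?_⟩
  have : i ≤ h.toFinset.sup id := Finset.le_sup (f := id) (h.mem_toFinset.mpr hi)
  omega

lemma permprod {M : Type*} [CommMonoid M] (τ : Equiv.Perm ℕ) (N : ℕ)
    (hτ : ∀ i, N ≤ i → τ i = i) (f : ℕ → M) :
    ∏ i ∈ Finset.range N, f (τ i) = ∏ i ∈ Finset.range N, f i := by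
  have hstab : ∀ i, i < N → τ i < N := by
    intro i hi
    by_contra hcon
    push_neg at hcon
    have := hτ _ hcon
    have : τ (τ i) = τ i := this
    have : τ i = i := τ.injective this
    omega
  apply Finset.prod_nbij' (fun i => τ i) (fun j => τ.symm j)
  · intro i hi
    simp only [Finset.mem_range] at *
    exact hstab i hi
  · intro j hj
    simp only [Finset.mem_range] at *
    by_contra hcon
    push_neg at hcon
    have h1 := hτ _ hcon
    have h2 : j = τ.symm j := by
      rw [← h1]
      exact (Equiv.apply_symm_apply τ j).symm
    omega
  · intro i _; exact τ.symm_apply_apply i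
  · intro j _; exact τ.apply_symm_apply j
  · intro i _; rfl

/-- If `x` has no zero entries and `x i = δ i * x (τ i)`, then the sign product is 1. -/
lemma prod_one_of_selfrel {x : ℕ → ℚ} (hx0 : ∀ i, x i ≠ 0) (τ : Equiv.Perm ℕ) (δ : ℕ → ℤ)
    (N : ℕ) (hτ : ∀ i, N ≤ i → τ i = i) (heq : ∀ i, x i = (δ i : ℚ) * x (τ i)) :
    ∏ i ∈ Finset.range N, δ i = 1 := by
  have h1 : ∏ i ∈ Finset.range N, x i =
      (∏ i ∈ Finset.range N, (δ i : ℚ)) * ∏ i ∈ Finset.range N, x (τ i) := by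
    rw [← Finset.prod_mul_distrib]
    exact Finset.prod_congr rfl (fun i _ => heq i)
  rw [permprod τ N hτ x] at h1
  have h2 : ∏ i ∈ Finset.range N, x i ≠ 0 := Finset.prod_ne_zero_iff.2 (fun i _ => hx0 i)
  have h3 : (∏ i ∈ Finset.range N, (δ i : ℚ)) = 1 := by
    apply mul_right_cancel₀ h2
    rw [one_mul, ← h1]
  have h4 : ((∏ i ∈ Finset.range N, δ i : ℤ) : ℚ) = 1 := by push_cast; exact h3
  exact_mod_cast h4

lemma prod_sign_even {ε : ℕ → ℤ} (hε : ∀ i, ε i = 1 ∨ ε i = -1) (F : Finset ℕ)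
    (hsub : {i | ε i = -1} ⊆ ↑F) :
    (Even {i | ε i = -1}.ncard ↔ ∏ i ∈ F, ε i = 1) := by
  classical
  set K := F.filter (fun i => ε i = -1) with hK
  have hset : {i | ε i = -1} = ↑K := by
    ext i
    simp only [Set.mem_setOf_eq, hK, Finset.coe_filter, Finset.mem_coe]
    constructor
    · intro h; exact ⟨hsub h, h⟩
    · intro h; exact h.2
  have hcard : {i | ε i = -1}.ncard = K.card := by rw [hset, Set.ncard_coe_finset]
  have hprod : ∏ i ∈ F, ε i = (-1 : ℤ) ^ K.card := by
    rw [← Finset.prod_filter_mul_prod_filter_not F (fun i => ε i = -1)]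
    have hK1 : ∏ i ∈ K, ε i = (-1 : ℤ) ^ K.card := by
      rw [Finset.prod_congr rfl (fun i hi => (Finset.mem_filter.1 hi).2)]
      simp [hK]
    have hK2 : ∏ i ∈ F.filter (fun i => ¬ ε i = -1), ε i = 1 := by
      apply Finset.prod_eq_one
      intro i hi
      rcases hε i with h | h
      · exact h
      · exact absurd h (Finset.mem_filter.1 hi).2
    rw [hK1, hK2, mul_one]
  rw [hcard, hprod]
  constructor
  · intro h; exact Even.neg_one_pow h
  · intro h
    by_contra hodd
    rw [Nat.not_even_iff_odd] at hodd
    rw [Odd.neg_one_pow hodd] at h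
    norm_num at h

lemma sign_cast_mul_self {e : ℤ} (h : e = 1 ∨ e = -1) (q : ℚ) : (e : ℚ) * ((e : ℚ) * q) = q := by
  rcases h with h | h <;> rw [h] <;> push_cast <;> ring

lemma orb'_symm {x y : ℕ → ℚ} {σ : Equiv.Perm ℕ} {ε : ℕ → ℤ}
    (hsig : ∀ i, ε i = 1 ∨ ε i = -1)
    (heq : ∀ i, x i = (ε i : ℚ) * y (σ i)) :
    ∀ j, y j = (ε (σ.symm j) : ℚ) * x (σ.symm j) := by
  intro j
  have h := heq (σ.symm j)
  rw [Equiv.apply_symm_apply] at h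
  rw [h, sign_cast_mul_self (hsig _)]

lemma flipkey {x y : ℕ → ℚ} {σ : Equiv.Perm ℕ} {ε : ℕ → ℤ}
    (hy : BAplus y)
    (hsig : ∀ i, ε i = 1 ∨ ε i = -1)
    (heq : ∀ i, x i = (ε i : ℚ) * y (σ i)) :
    ∀ q, q ∈ Set.range x → q ∉ Set.range y → -q ∈ Set.range y ∧ -q ∉ Set.range x ∧ q ≠ 0 := by
  intro q hqx hqy
  obtain ⟨i, rfl⟩ := hqx
  have hεi : ε i = -1 := by
    rcases hsig i with h | h
    · exfalso; apply hqy; rw [heq i, h]; push_cast; rw [one_mul]; exact ⟨σ i, rfl⟩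
    · exact h
  have hyσ : y (σ i) = -(x i) := by
    have := heq i
    rw [hεi] at this
    push_cast at this
    linarith
  have hq0 : x i ≠ 0 := by
    intro h0
    apply hqy
    rw [h0] at hyσ ⊢
    simp only [neg_zero] at hyσ
    exact ⟨σ i, hyσ⟩
  refine ⟨⟨σ i, hyσ⟩, ?_, hq0⟩
  rintro ⟨j, hj⟩
  rcases hsig j with hεj | hεj
  · -- x j = y (σ j) = -(x i) = y (σ i)
    have h1 : y (σ j) = -(x i) := by
      have := heq j
      rw [hεj] at this
      push_cast at this
      rw [one_mul] at this
      rw [← this, hj]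
    have h2 : σ j = σ i := ba_inj hy (by rw [h1, hyσ])
    have h3 : j = i := σ.injective h2
    rw [h3] at hj
    apply hq0
    linarith
  · -- y (σ j) = x i ∈ range y, contradiction
    apply hqy
    have h1 : y (σ j) = x i := by
      have := heq j
      rw [hεj] at this
      push_cast at this
      rw [hj] at this
      linarith
    exact ⟨σ j, h1⟩

/-- Parity transfer: two signed-permutation representations of the same pair
have the same sign-count parity, provided `x` has no zero entry. -/
lemma parity_transfer {x y : ℕ → ℚ}
    {σ σ' : Equiv.Perm ℕ} {ε ε' : ℕ → ℤ}
    (hx0 : ∀ i, x i ≠ 0)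
    (hsig : ∀ i, ε i = 1 ∨ ε i = -1) (hsig' : ∀ i, ε' i = 1 ∨ ε' i = -1)
    (hfin : {i | σ i ≠ i ∨ ε i ≠ 1}.Finite) (hfin' : {i | σ' i ≠ i ∨ ε' i ≠ 1}.Finite)
    (heq : ∀ i, x i = (ε i : ℚ) * y (σ i)) (heq' : ∀ i, x i = (ε' i : ℚ) * y (σ' i))
    (hev : Even {i | ε i = -1}.ncard) :
    Even {i | ε' i = -1}.ncard := by
  obtain ⟨N, hN⟩ := finite_bound (hfin.union hfin')
  have hfix : ∀ i, N ≤ i → σ i = i ∧ ε i = 1 ∧ σ' i = i ∧ ε' i = 1 := by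
    intro i hi
    have h1 : i ∉ ({j | σ j ≠ j ∨ ε j ≠ 1} ∪ {j | σ' j ≠ j ∨ ε' j ≠ 1}) := by
      intro hc
      exact absurd (hN i hc) (by omega)
    simp only [Set.mem_union, Set.mem_setOf_eq, not_or, not_not] at h1
    exact ⟨h1.1.1, h1.1.2, h1.2.1, h1.2.2⟩
  set τ : Equiv.Perm ℕ := σ.trans σ'.symm with hτdef
  set δ : ℕ → ℤ := fun i => ε i * ε' (σ'.symm (σ i)) with hδdef
  have hτfix : ∀ i, N ≤ i → τ i = i := by
    intro i hi
    obtain ⟨h1, _, h3, _⟩ := hfix i hi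
    show σ'.symm (σ i) = i
    rw [h1]
    exact (Equiv.symm_apply_eq σ').mpr h3.symm
  have hδeq : ∀ i, x i = (δ i : ℚ) * x (τ i) := by
    intro i
    have h1 := heq i
    have h2 := orb'_symm hsig' heq' (σ i)
    rw [h2] at h1
    rw [h1, hδdef]
    show _ = ((ε i * ε' (σ'.symm (σ i)) : ℤ) : ℚ) * x (σ'.symm (σ i))
    push_cast
    ring
  have hprod : ∏ i ∈ Finset.range N, δ i = 1 :=
    prod_one_of_selfrel hx0 τ δ N hτfix hδeq
  have hsplit : ∏ i ∈ Finset.range N, δ i =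
      (∏ i ∈ Finset.range N, ε i) * ∏ i ∈ Finset.range N, ε' (σ'.symm (σ i)) := by
    rw [← Finset.prod_mul_distrib]
  have hperm : ∏ i ∈ Finset.range N, ε' (σ'.symm (σ i)) = ∏ i ∈ Finset.range N, ε' i :=
    permprod τ N hτfix ε'
  have hsubε : {i | ε i = -1} ⊆ ↑(Finset.range N) := by
    intro i hi
    simp only [Set.mem_setOf_eq] at hi
    simp only [Finset.coe_range, Set.mem_Iio]
    by_contra hc
    push_neg at hc
    have := (hfix i hc).2.1
    rw [this] at hi
    simp at hi
  have hsubε' : {i | ε' i = -1} ⊆ ↑(Finset.range N) := by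
    intro i hi
    simp only [Set.mem_setOf_eq] at hi
    simp only [Finset.coe_range, Set.mem_Iio]
    by_contra hc
    push_neg at hc
    have := (hfix i hc).2.2.2
    rw [this] at hi
    simp at hi
  have hε1 : ∏ i ∈ Finset.range N, ε i = 1 :=
    (prod_sign_even hsig _ hsubε).1 hev
  have hε'1 : ∏ i ∈ Finset.range N, ε' i = 1 := by
    rw [hsplit, hperm, hε1, one_mul] at hprod
    exact hprod
  exact (prod_sign_even hsig' _ hsubε').2 hε'1

lemma mem_BIvee {x : ℕ → ℚ} {n : ℚ} : n ∈ BIvee x ↔ 0 < n ∧ -n ∈ Set.range x := by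
  simp [BIvee, Set.range, eq_comm]

lemma mem_BIwedge {x : ℕ → ℚ} {n : ℚ} : n ∈ BIwedge x ↔ 0 < n ∧ n ∈ Set.range x := by
  simp [BIwedge, Set.range, eq_comm]

open Classical in
lemma bd_pos {x : ℕ → ℚ} {n : ℚ} (hn : 0 < n) :
    bdiagram x n = if -n ∈ Set.range x then (if n ∈ Set.range x then BLbl.times else BLbl.vee)
      else (if n ∈ Set.range x then BLbl.wedge else BLbl.circ) := by
  unfold bdiagram
  rw [if_neg (by rintro ⟨h0, _⟩; exact absurd h0 (ne_of_gt hn))]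
  split_ifs <;> simp_all [mem_BIvee, mem_BIwedge]

open Classical in
lemma bd_zero {x : ℕ → ℚ} : bdiagram x 0 = if 0 ∈ Set.range x then BLbl.diam else BLbl.circ := by
  unfold bdiagram
  split_ifs <;> simp_all [mem_BIvee, mem_BIwedge, Set.mem_range]

lemma bd_neg {x : ℕ → ℚ} {n : ℚ} (hn : n < 0) : bdiagram x n = BLbl.circ := by
  unfold bdiagram
  rw [if_neg (by rintro ⟨h0, _⟩; rw [h0] at hn; exact absurd hn (lt_irrefl 0))]
  rw [if_neg, if_neg]
  · simp only [mem_BIwedge]; rintro ⟨h, _⟩; linarith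
  · simp only [mem_BIvee]; rintro ⟨h, _⟩; linarith

lemma resolve_ne_diam {b : BLbl} (h : b ≠ BLbl.diam) (c c' : Bool) :
    resolve c b = resolve c' b := by
  cases b <;> first | rfl | exact absurd rfl h

lemma bd_ne_diam {x : ℕ → ℚ} {n : ℚ} (hn : n ≠ 0) : bdiagram x n ≠ BLbl.diam := by
  rcases lt_trichotomy n 0 with h | h | h
  · rw [bd_neg h]; intro hc; cases hc
  · exact absurd h hn
  · rw [bd_pos h]; split_ifs <;> intro hc <;> cases hc

/-- From equal resolved labels at a positive vertex, equal memberships. -/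
lemma mem_of_lbl_eq {x y : ℕ → ℚ} {n : ℚ} (hn : 0 < n) {c c' : Bool}
    (h : resolve c (bdiagram x n) = resolve c' (bdiagram y n)) :
    (n ∈ Set.range x ↔ n ∈ Set.range y) ∧ (-n ∈ Set.range x ↔ -n ∈ Set.range y) := by
  rw [bd_pos hn, bd_pos hn] at h
  split_ifs at h <;>
    first
      | (constructor <;> tauto)
      | (exfalso; simp [resolve] at h)

/-- A resolved label that is `∨` or `∧` forces the vertex structure. -/
lemma lbl_active {x : ℕ → ℚ} {n : ℚ} {c : Bool}
    (h : resolve c (bdiagram x n) = Lbl.vee ∨ resolve c (bdiagram x n) = Lbl.wedge) :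
    (0 < n ∧ ((n ∈ Set.range x ∧ -n ∉ Set.range x) ∨ (-n ∈ Set.range x ∧ n ∉ Set.range x)))
      ∨ (n = 0 ∧ 0 ∈ Set.range x) := by
  rcases lt_trichotomy n 0 with hn | hn | hn
  · rw [bd_neg hn] at h
    simp [resolve] at h
  · right
    refine ⟨hn, ?_⟩
    subst hn
    rw [bd_zero] at h
    by_cases h0 : 0 ∈ Set.range x
    · exact h0
    · rw [if_neg h0] at h
      simp [resolve] at h
  · left
    refine ⟨hn, ?_⟩
    rw [bd_pos hn] at h
    split_ifs at h <;>
      first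
        | tauto
        | (exfalso; simp [resolve] at h)

/-- The intermediate combinatorial relation. -/
def Mid (x y : ℕ → ℚ) : Prop :=
  BAplus x ∧ BAplus y ∧ ∃ S : Finset ℚ,
    (∀ v ∈ S, 0 < v) ∧
    (∀ v ∈ S, (v ∈ Set.range x ∧ -v ∉ Set.range x) ∨ (-v ∈ Set.range x ∧ v ∉ Set.range x)) ∧
    (∀ q, q ∈ Set.range x ↔ flip S q ∈ Set.range y) ∧
    (0 ∈ Set.range x ∨ Even S.card)

lemma resolve_eq_vee {b : BLbl} (hb : b ≠ BLbl.diam) (c : Bool) :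
    resolve c b = Lbl.vee ↔ b = BLbl.vee := by
  cases b <;> first | exact absurd rfl hb | simp [resolve]

lemma resolve_eq_wedge {b : BLbl} (hb : b ≠ BLbl.diam) (c : Bool) :
    resolve c b = Lbl.wedge ↔ b = BLbl.wedge := by
  cases b <;> first | exact absurd rfl hb | simp [resolve]

lemma zero_mem_of_lbl {x y : ℕ → ℚ} {c c' : Bool}
    (h : resolve c (bdiagram x 0) = resolve c' (bdiagram y 0)) :
    (0 ∈ Set.range x ↔ 0 ∈ Set.range y) := by
  rw [bd_zero, bd_zero] at h
  split_ifs at h <;>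
    first
      | tauto
      | (exfalso; cases c <;> cases c' <;> simp [resolve] at h)

/-- membership info at a positive changed point. -/
lemma flip_point {x y : ℕ → ℚ} {u : ℚ} (hu : 0 < u) {c c' : Bool}
    (h : (resolve c (bdiagram x u) = Lbl.vee ∧ resolve c' (bdiagram y u) = Lbl.wedge) ∨
         (resolve c (bdiagram x u) = Lbl.wedge ∧ resolve c' (bdiagram y u) = Lbl.vee)) :
    ((-u ∈ Set.range x ∧ u ∉ Set.range x) ∧ (u ∈ Set.range y ∧ -u ∉ Set.range y)) ∨
    ((u ∈ Set.range x ∧ -u ∉ Set.range x) ∧ (-u ∈ Set.range y ∧ u ∉ Set.range y)) := by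
  have hdx := bd_ne_diam (x := x) (n := u) (ne_of_gt hu)
  have hdy := bd_ne_diam (x := y) (n := u) (ne_of_gt hu)
  rcases h with ⟨h1, h2⟩ | ⟨h1, h2⟩
  · left
    rw [resolve_eq_vee hdx c] at h1
    rw [resolve_eq_wedge hdy c'] at h2
    rw [bd_pos hu] at h1 h2
    constructor
    · split_ifs at h1 with hm1 hm2 hm2 <;> first | tauto | (exfalso; cases h1)
    · split_ifs at h2 with hm1 hm2 hm2 <;> first | tauto | (exfalso; cases h2)
  · right
    rw [resolve_eq_wedge hdx c] at h1
    rw [resolve_eq_vee hdy c'] at h2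
    rw [bd_pos hu] at h1 h2
    constructor
    · split_ifs at h1 with hm1 hm2 hm2 <;> first | tauto | (exfalso; cases h1)
    · split_ifs at h2 with hm1 hm2 hm2 <;> first | tauto | (exfalso; cases h2)

set_option maxHeartbeats 1600000 in
lemma mid_of_move {x y : ℕ → ℚ} (h : BMove x y) : Mid x y := by
  classical
  obtain ⟨hx, hy, c, c', v, w, hvw, hout, hpat⟩ := h
  simp only [Function.comp_apply] at hout hpat
  -- opposite labels at v and at w
  have hv : (resolve c (bdiagram x v) = Lbl.vee ∧ resolve c' (bdiagram y v) = Lbl.wedge) ∨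
      (resolve c (bdiagram x v) = Lbl.wedge ∧ resolve c' (bdiagram y v) = Lbl.vee) := by
    rcases hpat with ⟨h1, _, h3, _⟩ | ⟨h1, _, h3, _⟩ | ⟨h1, _, h3, _⟩
    · exact Or.inl ⟨h1, h3⟩
    · exact Or.inl ⟨h1, h3⟩
    · exact Or.inr ⟨h1, h3⟩
  have hw : (resolve c (bdiagram x w) = Lbl.vee ∧ resolve c' (bdiagram y w) = Lbl.wedge) ∨
      (resolve c (bdiagram x w) = Lbl.wedge ∧ resolve c' (bdiagram y w) = Lbl.vee) := by
    rcases hpat with ⟨_, h2, _, h4⟩ | ⟨_, h2, _, h4⟩ | ⟨_, h2, _, h4⟩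
    · exact Or.inr ⟨h2, h4⟩
    · exact Or.inl ⟨h2, h4⟩
    · exact Or.inr ⟨h2, h4⟩
  clear hpat
  have hva := lbl_active (x := x) (n := v) (c := c) (hv.imp And.left And.left)
  have hwa := lbl_active (x := x) (n := w) (c := c) (hw.imp And.left And.left)
  have hvay := lbl_active (x := y) (n := v) (c := c') ((hv.imp And.right And.right).symm)
  have hway := lbl_active (x := y) (n := w) (c := c') ((hw.imp And.right And.right).symm)
  have hzero : 0 ∈ Set.range x ↔ 0 ∈ Set.range y := by
    by_cases hv0 : v = 0
    · subst hv0
      constructor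
      · intro _
        rcases hvay with ⟨h0, _⟩ | ⟨_, h0⟩
        · exact absurd h0 (lt_irrefl 0)
        · exact h0
      · intro _
        rcases hva with ⟨h0, _⟩ | ⟨_, h0⟩
        · exact absurd h0 (lt_irrefl 0)
        · exact h0
    · by_cases hw0 : w = 0
      · subst hw0
        constructor
        · intro _
          rcases hway with ⟨h0, _⟩ | ⟨_, h0⟩
          · exact absurd h0 (lt_irrefl 0)
          · exact h0
        · intro _
          rcases hwa with ⟨h0, _⟩ | ⟨_, h0⟩
          · exact absurd h0 (lt_irrefl 0)
          · exact h0
      · exact zero_mem_of_lbl (hout 0 (fun hh => hv0 hh.symm) (fun hh => hw0 hh.symm)).symm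
  set S : Finset ℚ := ({v, w} : Finset ℚ).filter (fun u => 0 < u) with hS
  have hmemS : ∀ u : ℚ, u ∈ S ↔ (u = v ∨ u = w) ∧ 0 < u := by
    intro u
    simp [hS, Finset.mem_filter, Finset.mem_insert, Finset.mem_singleton]
  refine ⟨hx, hy, S, ?_, ?_, ?_, ?_⟩
  · intro u hu; exact ((hmemS u).1 hu).2
  · -- purity in x
    intro u hu
    obtain ⟨huvw, hupos⟩ := (hmemS u).1 hu
    rcases huvw with rfl | rfl
    · rcases hva with ⟨_, hp⟩ | ⟨h0, _⟩
      · exact hp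
      · rw [h0] at hupos; exact absurd hupos (lt_irrefl 0)
    · rcases hwa with ⟨_, hp⟩ | ⟨h0, _⟩
      · exact hp
      · rw [h0] at hupos; exact absurd hupos (lt_irrefl 0)
  · -- flip correspondence
    intro q
    by_cases hq0 : q = 0
    · subst hq0; rw [flip_zero]; exact hzero
    · by_cases habs : |q| ∈ S
      · rw [flip_eq_neg habs]
        obtain ⟨hqvw, hqpos⟩ := (hmemS _).1 habs
        have hps : ((-|q| ∈ Set.range x ∧ |q| ∉ Set.range x) ∧
              (|q| ∈ Set.range y ∧ -|q| ∉ Set.range y)) ∨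
            ((|q| ∈ Set.range x ∧ -|q| ∉ Set.range x) ∧
              (-|q| ∈ Set.range y ∧ |q| ∉ Set.range y)) := by
          rcases hqvw with hq | hq
          · rw [hq]; exact flip_point (hq ▸ hqpos) hv
          · rw [hq]; exact flip_point (hq ▸ hqpos) hw
        rcases abs_cases q with ⟨ha, _⟩ | ⟨ha, _⟩
        · rw [ha] at hps
          rcases hps with ⟨⟨_, h2⟩, ⟨_, h4⟩⟩ | ⟨⟨h1, _⟩, ⟨h3, _⟩⟩
          · constructor
            · intro hc; exact absurd hc h2
            · intro hc; exact absurd hc h4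
          · exact iff_of_true h1 h3
        · have ha' : -q = |q| := by linarith
          rw [← ha'] at hps
          have hqq : - -q = q := by ring
          rw [hqq] at hps
          rcases hps with ⟨⟨h1, _⟩, ⟨h3, _⟩⟩ | ⟨⟨_, h2⟩, ⟨_, h4⟩⟩
          · exact iff_of_true h1 h3
          · constructor
            · intro hc; exact absurd hc h2
            · intro hc; exact absurd hc h4
      · rw [flip_eq_of_not_mem habs]
        have hqpos : 0 < |q| := abs_pos.mpr hq0
        have hne : |q| ≠ v ∧ |q| ≠ w := by
          constructor
          · intro hc; exact habs ((hmemS _).2 ⟨Or.inl hc, hqpos⟩)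
          · intro hc; exact habs ((hmemS _).2 ⟨Or.inr hc, hqpos⟩)
        have hlbl := hout |q| hne.1 hne.2
        have hmm := mem_of_lbl_eq hqpos hlbl.symm
        rcases abs_cases q with ⟨ha, _⟩ | ⟨ha, _⟩
        · rw [ha] at hmm; exact hmm.1
        · have ha' : q = -|q| := by linarith
          rw [ha']; exact hmm.2
  · -- parity
    by_cases h0 : 0 ∈ Set.range x
    · left; exact h0
    · right
      have hv0 : 0 < v := by
        rcases hva with ⟨h1, _⟩ | ⟨_, h2⟩
        · exact h1
        · exact absurd h2 h0
      have hw0 : 0 < w := by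
        rcases hwa with ⟨h1, _⟩ | ⟨_, h2⟩
        · exact h1
        · exact absurd h2 h0
      have : S = {v, w} := by
        rw [hS]
        apply Finset.filter_true_of_mem
        intro u hu
        rcases Finset.mem_insert.1 hu with rfl | hu
        · exact hv0
        · rw [Finset.mem_singleton.1 hu]; exact hw0
      rw [this, Finset.card_insert_of_notMem (by simpa using hvw), Finset.card_singleton]
      exact even_two

lemma card_flipset {x : ℕ → ℚ} (hx : BAplus x) {S : Finset ℚ} (hSpos : ∀ v ∈ S, 0 < v)
    (hpure : ∀ v ∈ S,
      (v ∈ Set.range x ∧ -v ∉ Set.range x) ∨ (-v ∈ Set.range x ∧ v ∉ Set.range x)) :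
    {i | flip S (x i) ≠ x i}.ncard = S.card := by
  classical
  set A := {i | flip S (x i) ≠ x i} with hA
  have hmemA : ∀ i, i ∈ A ↔ (|x i| ∈ S ∧ x i ≠ 0) := by
    intro i
    constructor
    · intro hi
      have h1 : |x i| ∈ S := by
        by_contra hc
        exact hi (flip_eq_of_not_mem hc)
      refine ⟨h1, ?_⟩
      intro h0
      apply hi
      rw [h0, flip_zero]
    · rintro ⟨h1, h2⟩
      show flip S (x i) ≠ x i
      rw [flip_eq_neg h1]
      intro hc
      apply h2
      linarith
  have himg : (fun i => |x i|) '' A = ↑S := by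
    apply Set.eq_of_subset_of_subset
    · rintro v ⟨i, hi, rfl⟩
      exact ((hmemA i).1 hi).1
    · intro v hv
      have hv' : v ∈ S := hv
      have hvpos := hSpos v hv'
      rcases hpure v hv' with ⟨⟨i, hi⟩, _⟩ | ⟨⟨i, hi⟩, _⟩
      · refine ⟨i, ?_, ?_⟩
        · rw [hmemA i, hi, abs_of_pos hvpos]
          exact ⟨hv', ne_of_gt hvpos⟩
        · show |x i| = v
          rw [hi, abs_of_pos hvpos]
      · refine ⟨i, ?_, ?_⟩
        · rw [hmemA i, hi, abs_neg, abs_of_pos hvpos]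
          exact ⟨hv', neg_ne_zero.mpr (ne_of_gt hvpos)⟩
        · show |x i| = v
          rw [hi, abs_neg, abs_of_pos hvpos]
  have hinj : Set.InjOn (fun i => |x i|) A := by
    intro i hiA j hjA hij
    simp only at hij
    rcases abs_eq_abs.1 hij with h | h
    · exact ba_inj hx h
    · exfalso
      have h1 := (hmemA i).1 hiA
      have hvS : |x i| ∈ S := h1.1
      rcases hpure _ hvS with ⟨hp1, hp2⟩ | ⟨hp1, hp2⟩
      · rcases abs_cases (x i) with ⟨ha, _⟩ | ⟨ha, _⟩
        · exact hp2 ⟨j, by rw [ha]; linarith⟩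
        · exact hp2 ⟨i, by rw [ha]; ring⟩
      · rcases abs_cases (x i) with ⟨ha, _⟩ | ⟨ha, _⟩
        · exact hp2 ⟨i, ha.symm⟩
        · exact hp2 ⟨j, by rw [ha]; linarith⟩
  calc A.ncard = ((fun i => |x i|) '' A).ncard := (Set.ncard_image_of_injOn hinj).symm
  _ = (↑S : Set ℚ).ncard := by rw [himg]
  _ = S.card := Set.ncard_coe_finset S

lemma orbit_of_mid {x y : ℕ → ℚ} (h : Mid x y) : SameWOrbitBrauer x y := by
  classical
  obtain ⟨hx, hy, S, hSpos, hSpure, hSflip, hSpar⟩ := h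
  obtain ⟨σ, ε, hsig, hfin, heq, hset⟩ := orb'_of_flipcorr hx hy ⟨hSpos, hSflip⟩
  have hcard : {i | ε i = -1}.ncard = S.card := by
    rw [hset]; exact card_flipset hx hSpos hSpure
  by_cases hev : Even {i | ε i = -1}.ncard
  · exact ⟨σ, ε, hsig, hfin, hev, heq⟩
  · -- odd: must have 0 ∈ range x, flip the sign at the zero entry
    have h0 : 0 ∈ Set.range x := by
      rcases hSpar with h0 | hpar
      · exact h0
      · exact absurd (hcard ▸ hpar) hev
    obtain ⟨i0, hi0⟩ := h0
    have hflip0 : flip S (x i0) = x i0 := by rw [hi0, flip_zero]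
    have hεi0 : ε i0 = 1 := by
      rcases hsig i0 with h | h
      · exact h
      · exfalso
        have : i0 ∈ {i | ε i = -1} := h
        rw [hset] at this
        exact this hflip0
    have hyσ : y (σ i0) = 0 := by
      have := heq i0
      rw [hi0, hεi0] at this
      push_cast at this
      linarith
    set ε' : ℕ → ℤ := Function.update ε i0 (-1) with hε'
    have hsig' : ∀ i, ε' i = 1 ∨ ε' i = -1 := by
      intro i
      by_cases hi : i = i0
      · subst hi; right; rw [hε', Function.update_self]
      · rw [hε', Function.update_of_ne hi]; exact hsig i
    have heq' : ∀ i, x i = (ε' i : ℚ) * y (σ i) := by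
      intro i
      by_cases hi : i = i0
      · subst hi
        rw [hε', Function.update_self, hi0, hyσ]
        norm_num
      · rw [hε', Function.update_of_ne hi]; exact heq i
    have hfin' : {i | σ i ≠ i ∨ ε' i ≠ 1}.Finite := by
      apply (hfin.union (Set.finite_singleton i0)).subset
      intro i hi
      by_cases hii : i = i0
      · right; exact hii
      · left
        rcases hi with hi | hi
        · exact Or.inl hi
        · rw [hε', Function.update_of_ne hii] at hi
          exact Or.inr hi
    have hsetε' : {i | ε' i = -1} = insert i0 {i | ε i = -1} := by
      ext i
      by_cases hii : i = i0
      · subst hii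
        simp only [Set.mem_setOf_eq, hε', Function.update_self, Set.mem_insert_iff]
        tauto
      · simp only [Set.mem_setOf_eq, hε', Function.update_of_ne hii, Set.mem_insert_iff]
        constructor
        · intro hh; exact Or.inr hh
        · intro hh
          rcases hh with hh | hh
          · exact absurd hh hii
          · exact hh
    have hfinset : {i | ε i = -1}.Finite := by
      apply hfin.subset
      intro i hi
      right
      simp only [Set.mem_setOf_eq] at hi
      rw [hi]
      norm_num
    have hnotmem : i0 ∉ {i | ε i = -1} := by
      simp only [Set.mem_setOf_eq, hεi0]
      norm_num
    have hev' : Even {i | ε' i = -1}.ncard := by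
      rw [hsetε', Set.ncard_insert_of_notMem hnotmem hfinset]
      rw [Nat.even_add_one]
      exact hev
    exact ⟨σ, ε', hsig', hfin', hev', heq'⟩

lemma orbit_refl (x : ℕ → ℚ) : SameWOrbitBrauer x x := by
  refine ⟨Equiv.refl ℕ, fun _ => 1, fun i => Or.inl rfl, ?_, ?_, ?_⟩
  · convert Set.finite_empty
    ext i
    simp
  · have h : {i : ℕ | (fun _ : ℕ => (1:ℤ)) i = -1} = ∅ := by
      ext i
      simp
    rw [h, Set.ncard_empty]
    exact Even.zero
  · intro i
    simp

lemma orbit_trans {x y z : ℕ → ℚ}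
    (h1 : SameWOrbitBrauer x y) (h2 : SameWOrbitBrauer y z) : SameWOrbitBrauer x z := by
  classical
  obtain ⟨σ, ε, hsig, hfin, hev, heq⟩ := h1
  obtain ⟨τ, δ, hsig', hfin', hev', heq'⟩ := h2
  obtain ⟨N, hN⟩ := finite_bound (hfin.union hfin')
  have hfix : ∀ i, N ≤ i → σ i = i ∧ ε i = 1 ∧ τ i = i ∧ δ i = 1 := by
    intro i hi
    have hni : i ∉ ({j | σ j ≠ j ∨ ε j ≠ 1} ∪ {j | τ j ≠ j ∨ δ j ≠ 1}) := by
      intro hc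
      exact absurd (hN i hc) (by omega)
    simp only [Set.mem_union, Set.mem_setOf_eq, not_or, not_not] at hni
    exact ⟨hni.1.1, hni.1.2, hni.2.1, hni.2.2⟩
  refine ⟨σ.trans τ, fun i => ε i * δ (σ i), ?_, ?_, ?_, ?_⟩
  · intro i
    show ε i * δ (σ i) = 1 ∨ ε i * δ (σ i) = -1
    rcases hsig i with h | h <;> rcases hsig' (σ i) with h' | h' <;> rw [h, h'] <;> norm_num
  · apply ((Set.finite_Iio N)).subset
    intro i hi
    simp only [Set.mem_Iio]
    by_contra hc
    push_neg at hc
    obtain ⟨hσ, hε, hτ, hδ⟩ := hfix i hc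
    rcases hi with hi | hi
    · apply hi
      show τ (σ i) = i
      rw [hσ, hτ]
    · apply hi
      show ε i * δ (σ i) = 1
      rw [hσ, hε, hδ]
      norm_num
  · -- parity
    have hsub1 : {i | ε i = -1} ⊆ ↑(Finset.range N) := by
      intro i hi
      simp only [Set.mem_setOf_eq] at hi
      simp only [Finset.coe_range, Set.mem_Iio]
      by_contra hc
      push_neg at hc
      rw [(hfix i hc).2.1] at hi
      norm_num at hi
    have hsub2 : {i | δ i = -1} ⊆ ↑(Finset.range N) := by
      intro i hi
      simp only [Set.mem_setOf_eq] at hi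
      simp only [Finset.coe_range, Set.mem_Iio]
      by_contra hc
      push_neg at hc
      rw [(hfix i hc).2.2.2] at hi
      norm_num at hi
    have hsub3 : {i | ε i * δ (σ i) = -1} ⊆ ↑(Finset.range N) := by
      intro i hi
      simp only [Set.mem_setOf_eq] at hi
      simp only [Finset.coe_range, Set.mem_Iio]
      by_contra hc
      push_neg at hc
      obtain ⟨hσ, hε, hτ, hδ⟩ := hfix i hc
      rw [hε, hσ, hδ] at hi
      norm_num at hi
    have hp1 : ∏ i ∈ Finset.range N, ε i = 1 := (prod_sign_even hsig _ hsub1).1 hev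
    have hp2 : ∏ i ∈ Finset.range N, δ i = 1 := (prod_sign_even hsig' _ hsub2).1 hev'
    have hσfix : ∀ i, N ≤ i → σ i = i := fun i hi => (hfix i hi).1
    have hp3 : ∏ i ∈ Finset.range N, (δ (σ i)) = 1 := by
      rw [permprod σ N hσfix δ]
      exact hp2
    apply (prod_sign_even (ε := fun i => ε i * δ (σ i)) (fun i => by
        show ε i * δ (σ i) = 1 ∨ ε i * δ (σ i) = -1
        rcases hsig i with h | h <;> rcases hsig' (σ i) with h' | h' <;> rw [h, h'] <;> norm_num)
      _ hsub3).2
    rw [Finset.prod_mul_distrib, hp1, hp3]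
    norm_num
  · intro i
    have h1 := heq i
    have h2 := heq' (σ i)
    rw [h2] at h1
    rw [h1]
    have h3 : (Equiv.trans σ τ) i = τ (σ i) := rfl
    rw [h3]
    show _ = ((ε i * δ (σ i) : ℤ) : ℚ) * _
    push_cast
    ring

lemma mid_of_orbit {x y : ℕ → ℚ} (hx : BAplus x) (hy : BAplus y)
    (h : SameWOrbitBrauer x y) : Mid x y := by
  classical
  obtain ⟨σ, ε, hsig, hfin, hev, heq⟩ := h
  -- the two one-sided key lemmas
  have hkey := flipkey hy hsig heq
  have heqsymm := orb'_symm hsig heq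
  have hkey' := flipkey (σ := σ.symm) (ε := fun j => ε (σ.symm j)) hx
    (fun j => hsig (σ.symm j)) heqsymm
  -- symmetric difference of ranges
  set E : Set ℚ := {q | (q ∈ Set.range x ∧ q ∉ Set.range y) ∨ (q ∈ Set.range y ∧ q ∉ Set.range x)}
    with hE
  have hEfin : E.Finite := by
    have hsub : E ⊆ (x '' {i | σ i ≠ i ∨ ε i ≠ 1}) ∪ (y '' (σ '' {i | σ i ≠ i ∨ ε i ≠ 1})) := by
      rintro q (⟨⟨i, rfl⟩, hq2⟩ | ⟨⟨j, rfl⟩, hq2⟩)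
      · left
        refine ⟨i, ?_, rfl⟩
        by_contra hc
        simp only [Set.mem_setOf_eq, not_or, not_not] at hc
        apply hq2
        rw [heq i, hc.2]
        push_cast
        rw [one_mul]
        exact ⟨σ i, rfl⟩
      · right
        refine ⟨σ (σ.symm j), ⟨σ.symm j, ?_, rfl⟩, by rw [Equiv.apply_symm_apply]⟩
        by_contra hc
        simp only [Set.mem_setOf_eq, not_or, not_not] at hc
        apply hq2
        have h1 := heqsymm j
        rw [hc.2] at h1
        push_cast at h1
        rw [one_mul] at h1
        exact ⟨σ.symm j, h1.symm⟩
    exact ((hfin.image x).union ((hfin.image σ).image y)).subset hsub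
  have hSfin : (E ∩ Set.Ioi 0).Finite := hEfin.inter_of_left _
  set S : Finset ℚ := hSfin.toFinset with hSdef
  have hmemS : ∀ v : ℚ, v ∈ S ↔ v ∈ E ∧ 0 < v := by
    intro v
    rw [hSdef, Set.Finite.mem_toFinset]
    exact Iff.rfl
  -- every element of E is nonzero, and E is symmetric
  have hE0 : ∀ q ∈ E, q ≠ 0 ∧ -q ∈ E := by
    rintro q (⟨h1, h2⟩ | ⟨h1, h2⟩)
    · obtain ⟨ha, hb, hc⟩ := hkey q h1 h2
      exact ⟨hc, Or.inr ⟨ha, hb⟩⟩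
    · obtain ⟨ha, hb, hc⟩ := hkey' q h1 h2
      exact ⟨hc, Or.inl ⟨ha, hb⟩⟩
  have habsS : ∀ q ∈ E, |q| ∈ S := by
    intro q hq
    obtain ⟨hq0, hqneg⟩ := hE0 q hq
    rcases abs_cases q with ⟨ha, hb⟩ | ⟨ha, hb⟩
    · rw [ha]
      exact (hmemS q).2 ⟨hq, lt_of_le_of_ne hb (Ne.symm hq0)⟩
    · rw [ha]
      exact (hmemS (-q)).2 ⟨hqneg, by linarith⟩
  refine ⟨hx, hy, S, ?_, ?_, ?_, ?_⟩
  · intro v hv; exact ((hmemS v).1 hv).2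
  · -- purity
    intro v hv
    obtain ⟨hvE, hvpos⟩ := (hmemS v).1 hv
    rcases hvE with ⟨h1, h2⟩ | ⟨h1, h2⟩
    · obtain ⟨_, hb, _⟩ := hkey v h1 h2
      exact Or.inl ⟨h1, hb⟩
    · obtain ⟨ha, _, _⟩ := hkey' v h1 h2
      exact Or.inr ⟨ha, h2⟩
  · -- flip correspondence
    intro q
    by_cases habs : |q| ∈ S
    · rw [flip_eq_neg habs]
      obtain ⟨hqE, hqpos⟩ := (hmemS _).1 habs
      rcases lt_trichotomy q 0 with hq | hq | hq
      · have ha : |q| = -q := abs_of_neg hq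
        rw [ha] at hqE
        rcases hqE with ⟨h1, h2⟩ | ⟨h1, h2⟩
        · -- -q ∈ range x \ range y
          obtain ⟨ha1, ha2, _⟩ := hkey (-q) h1 h2
          rw [neg_neg] at ha1 ha2
          exact iff_of_false ha2 h2
        · obtain ⟨ha1, ha2, _⟩ := hkey' (-q) h1 h2
          rw [neg_neg] at ha1 ha2
          exact iff_of_true ha1 h1
      · rw [hq] at habs
        simp only [abs_zero] at habs
        have := ((hmemS 0).1 habs).2
        exact absurd this (lt_irrefl 0)
      · have ha : |q| = q := abs_of_pos hq
        rw [ha] at hqE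
        rcases hqE with ⟨h1, h2⟩ | ⟨h1, h2⟩
        · obtain ⟨ha1, _, _⟩ := hkey q h1 h2
          exact iff_of_true h1 ha1
        · obtain ⟨_, hb2, _⟩ := hkey' q h1 h2
          exact iff_of_false h2 hb2
    · rw [flip_eq_of_not_mem habs]
      constructor
      · intro h1
        by_contra h2
        exact habs (habsS q (Or.inl ⟨h1, h2⟩))
      · intro h1
        by_contra h2
        exact habs (habsS q (Or.inr ⟨h1, h2⟩))
  · -- parity
    by_cases h0 : 0 ∈ Set.range x
    · exact Or.inl h0
    · right
      have hx0 : ∀ i, x i ≠ 0 := by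
        intro i hc
        exact h0 ⟨i, hc⟩
      have hSpos : ∀ v ∈ S, 0 < v := fun v hv => ((hmemS v).1 hv).2
      have hflip : ∀ q, q ∈ Set.range x ↔ flip S q ∈ Set.range y := by
        -- repeat of the above block; we re-derive it
        intro q
        by_cases habs : |q| ∈ S
        · rw [flip_eq_neg habs]
          obtain ⟨hqE, hqpos⟩ := (hmemS _).1 habs
          rcases lt_trichotomy q 0 with hq | hq | hq
          · have ha : |q| = -q := abs_of_neg hq
            rw [ha] at hqE
            rcases hqE with ⟨h1, h2⟩ | ⟨h1, h2⟩
            · obtain ⟨ha1, ha2, _⟩ := hkey (-q) h1 h2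
              rw [neg_neg] at ha1 ha2
              exact iff_of_false ha2 h2
            · obtain ⟨ha1, ha2, _⟩ := hkey' (-q) h1 h2
              rw [neg_neg] at ha1 ha2
              exact iff_of_true ha1 h1
          · rw [hq] at habs
            simp only [abs_zero] at habs
            have := ((hmemS 0).1 habs).2
            exact absurd this (lt_irrefl 0)
          · have ha : |q| = q := abs_of_pos hq
            rw [ha] at hqE
            rcases hqE with ⟨h1, h2⟩ | ⟨h1, h2⟩
            · obtain ⟨ha1, _, _⟩ := hkey q h1 h2
              exact iff_of_true h1 ha1
            · obtain ⟨_, hb2, _⟩ := hkey' q h1 h2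
              exact iff_of_false h2 hb2
        · rw [flip_eq_of_not_mem habs]
          constructor
          · intro h1
            by_contra h2
            exact habs (habsS q (Or.inl ⟨h1, h2⟩))
          · intro h1
            by_contra h2
            exact habs (habsS q (Or.inr ⟨h1, h2⟩))
      have hpure : ∀ v ∈ S,
          (v ∈ Set.range x ∧ -v ∉ Set.range x) ∨ (-v ∈ Set.range x ∧ v ∉ Set.range x) := by
        intro v hv
        obtain ⟨hvE, hvpos⟩ := (hmemS v).1 hv
        rcases hvE with ⟨h1, h2⟩ | ⟨h1, h2⟩
        · obtain ⟨_, hb, _⟩ := hkey v h1 h2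
          exact Or.inl ⟨h1, hb⟩
        · obtain ⟨ha, _, _⟩ := hkey' v h1 h2
          exact Or.inr ⟨ha, h2⟩
      obtain ⟨σ', ε', hsig', hfin', heq', hset'⟩ := orb'_of_flipcorr hx hy ⟨hSpos, hflip⟩
      have hev' : Even {i | ε' i = -1}.ncard :=
        parity_transfer hx0 hsig hsig' hfin hfin' heq heq' hev
      rw [hset'] at hev'
      rw [← card_flipset hx hSpos hpure]
      exact hev'

lemma rlbl_wedge {x : ℕ → ℚ} {u : ℚ} (hu : 0 < u) (h1 : u ∈ Set.range x)
    (h2 : -u ∉ Set.range x) (c : Bool) : resolve c (bdiagram x u) = Lbl.wedge := by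
  rw [bd_pos hu, if_neg h2, if_pos h1]
  rfl

lemma rlbl_vee {x : ℕ → ℚ} {u : ℚ} (hu : 0 < u) (h1 : -u ∈ Set.range x)
    (h2 : u ∉ Set.range x) (c : Bool) : resolve c (bdiagram x u) = Lbl.vee := by
  rw [bd_pos hu, if_pos h1, if_neg h2]
  rfl

lemma rlbl_diam {x : ℕ → ℚ} (h : 0 ∈ Set.range x) (c : Bool) :
    resolve c (bdiagram x 0) = if c then Lbl.vee else Lbl.wedge := by
  rw [bd_zero, if_pos h]
  rfl

/-- equality of all labels away from the changed points. -/
lemma lbl_eq_outside {x z : ℕ → ℚ} {S : Finset ℚ}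
    (hmem : ∀ q, q ∈ Set.range z ↔ flip S q ∈ Set.range x)
    {u : ℚ} (hu : u ≠ 0) (huS : u ∉ S) (c c' : Bool) :
    resolve c' (bdiagram z u) = resolve c (bdiagram x u) := by
  rcases lt_trichotomy u 0 with h | h | h
  · rw [bd_neg h, bd_neg h]
    exact resolve_ne_diam (by intro hc; cases hc) c' c
  · exact absurd h hu
  · have h1 : u ∈ Set.range z ↔ u ∈ Set.range x := by
      rw [hmem u, flip_eq_of_not_mem (by rwa [abs_of_pos h])]
    have h2 : -u ∈ Set.range z ↔ -u ∈ Set.range x := by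
      rw [hmem (-u), flip_eq_of_not_mem (by rwa [abs_neg, abs_of_pos h])]
    rw [bd_pos h, bd_pos h]
    by_cases hm1 : -u ∈ Set.range x <;> by_cases hm2 : u ∈ Set.range x
    · rw [if_pos hm1, if_pos (h1.2 hm2), if_pos hm2, if_pos (h2.2 hm1)]
      exact resolve_ne_diam (by intro hc; cases hc) c' c
    · rw [if_pos hm1, if_neg hm2, if_pos (h2.2 hm1), if_neg (fun hc => hm2 (h1.1 hc))]
      exact resolve_ne_diam (by intro hc; cases hc) c' c
    · rw [if_neg hm1, if_pos hm2, if_neg (fun hc => hm1 (h2.1 hc)), if_pos (h1.2 hm2)]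
      exact resolve_ne_diam (by intro hc; cases hc) c' c
    · rw [if_neg hm1, if_neg hm2, if_neg (fun hc => hm1 (h2.1 hc)),
        if_neg (fun hc => hm2 (h1.1 hc))]
      exact resolve_ne_diam (by intro hc; cases hc) c' c

lemma zero_lbl_eq {x z : ℕ → ℚ} (h : 0 ∈ Set.range z ↔ 0 ∈ Set.range x) (c : Bool) :
    resolve c (bdiagram z 0) = resolve c (bdiagram x 0) := by
  rw [bd_zero, bd_zero]
  by_cases h0 : 0 ∈ Set.range x
  · rw [if_pos h0, if_pos (h.2 h0)]
  · rw [if_neg h0, if_neg (fun hc => h0 (h.1 hc))]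

lemma flip_mem_pair {v w q : ℚ} (h : |q| = v ∨ |q| = w) (hv : 0 < v) (hw : 0 < w) :
    flip ({v, w} : Finset ℚ) q = -q := by
  apply flip_eq_neg
  rcases h with h | h <;> simp [h]

lemma flip_not_mem_pair {v w q : ℚ} (h1 : |q| ≠ v) (h2 : |q| ≠ w) :
    flip ({v, w} : Finset ℚ) q = q := by
  apply flip_eq_of_not_mem
  simp [h1, h2]

lemma bmove_pair {x z : ℕ → ℚ} (hx : BAplus x) (hz : BAplus z) {v w : ℚ}
    (hvw : v ≠ w) (hv : 0 < v) (hw : 0 < w)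
    (hmem : ∀ q, q ∈ Set.range z ↔ flip ({v, w} : Finset ℚ) q ∈ Set.range x)
    (hpv : (v ∈ Set.range x ∧ -v ∉ Set.range x) ∨ (-v ∈ Set.range x ∧ v ∉ Set.range x))
    (hpw : (w ∈ Set.range x ∧ -w ∉ Set.range x) ∨ (-w ∈ Set.range x ∧ w ∉ Set.range x)) :
    BMove x z := by
  refine ⟨hx, hz, true, true, ?_⟩
  have hzv : (v ∈ Set.range z ↔ -v ∈ Set.range x) ∧ (-v ∈ Set.range z ↔ v ∈ Set.range x) := by
    constructor
    · rw [hmem v, flip_mem_pair (Or.inl (abs_of_pos hv)) hv hw]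
    · rw [hmem (-v), flip_mem_pair (Or.inl (by rw [abs_neg, abs_of_pos hv])) hv hw, neg_neg]
  have hzw : (w ∈ Set.range z ↔ -w ∈ Set.range x) ∧ (-w ∈ Set.range z ↔ w ∈ Set.range x) := by
    constructor
    · rw [hmem w, flip_mem_pair (Or.inr (abs_of_pos hw)) hv hw]
    · rw [hmem (-w), flip_mem_pair (Or.inr (by rw [abs_neg, abs_of_pos hw])) hv hw, neg_neg]
  have hout : ∀ u, u ≠ v → u ≠ w →
      (resolve true ∘ bdiagram z) u = (resolve true ∘ bdiagram x) u := by
    intro u hu1 hu2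
    simp only [Function.comp_apply]
    by_cases hu0 : u = 0
    · subst hu0
      apply zero_lbl_eq
      rw [hmem 0, flip_zero]
    · exact lbl_eq_outside hmem hu0 (by simp [hu1, hu2]) true true
  rcases hpv with ⟨hv1, hv2⟩ | ⟨hv1, hv2⟩ <;> rcases hpw with ⟨hw1, hw2⟩ | ⟨hw1, hw2⟩
  · -- x: wedge at v, wedge at w  → pattern 3
    refine ⟨v, w, hvw, hout, ?_⟩
    simp only [Function.comp_apply]
    right; right
    refine ⟨rlbl_wedge hv hv1 hv2 true, rlbl_wedge hw hw1 hw2 true, ?_, ?_⟩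
    · exact rlbl_vee hv (hzv.2.2 hv1) (fun hc => hv2 (hzv.1.1 hc)) true
    · exact rlbl_vee hw (hzw.2.2 hw1) (fun hc => hw2 (hzw.1.1 hc)) true
  · -- wedge at v, vee at w → pattern 1 with witnesses (w, v)
    refine ⟨w, v, hvw.symm, fun u h1 h2 => hout u h2 h1, ?_⟩
    simp only [Function.comp_apply]
    left
    refine ⟨rlbl_vee hw hw1 hw2 true, rlbl_wedge hv hv1 hv2 true, ?_, ?_⟩
    · exact rlbl_wedge hw (hzw.1.2 hw1) (fun hc => hw2 (hzw.2.1 hc)) true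
    · exact rlbl_vee hv (hzv.2.2 hv1) (fun hc => hv2 (hzv.1.1 hc)) true
  · -- vee at v, wedge at w → pattern 1
    refine ⟨v, w, hvw, hout, ?_⟩
    simp only [Function.comp_apply]
    left
    refine ⟨rlbl_vee hv hv1 hv2 true, rlbl_wedge hw hw1 hw2 true, ?_, ?_⟩
    · exact rlbl_wedge hv (hzv.1.2 hv1) (fun hc => hv2 (hzv.2.1 hc)) true
    · exact rlbl_vee hw (hzw.2.2 hw1) (fun hc => hw2 (hzw.1.1 hc)) true
  · -- vee at v, vee at w → pattern 2
    refine ⟨v, w, hvw, hout, ?_⟩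
    simp only [Function.comp_apply]
    right; left
    refine ⟨rlbl_vee hv hv1 hv2 true, rlbl_vee hw hw1 hw2 true, ?_, ?_⟩
    · exact rlbl_wedge hv (hzv.1.2 hv1) (fun hc => hv2 (hzv.2.1 hc)) true
    · exact rlbl_wedge hw (hzw.1.2 hw1) (fun hc => hw2 (hzw.2.1 hc)) true

lemma bmove_diam {x z : ℕ → ℚ} (hx : BAplus x) (hz : BAplus z) {v : ℚ} (hv : 0 < v)
    (hmem : ∀ q, q ∈ Set.range z ↔ flip ({v} : Finset ℚ) q ∈ Set.range x)
    (hpv : (v ∈ Set.range x ∧ -v ∉ Set.range x) ∨ (-v ∈ Set.range x ∧ v ∉ Set.range x))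
    (h0 : 0 ∈ Set.range x) : BMove x z := by
  have h0z : 0 ∈ Set.range z := (hmem 0).2 (by rw [flip_zero]; exact h0)
  have hzv : (v ∈ Set.range z ↔ -v ∈ Set.range x) ∧ (-v ∈ Set.range z ↔ v ∈ Set.range x) := by
    constructor
    · rw [hmem v, flip_eq_neg (by rw [abs_of_pos hv]; exact Finset.mem_singleton_self v)]
    · rw [hmem (-v), flip_eq_neg (by rw [abs_neg, abs_of_pos hv]; exact Finset.mem_singleton_self v),
        neg_neg]
  have hout : ∀ (c c' : Bool), ∀ u, u ≠ v → u ≠ 0 →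
      (resolve c' ∘ bdiagram z) u = (resolve c ∘ bdiagram x) u := by
    intro c c' u hu1 hu0
    simp only [Function.comp_apply]
    exact lbl_eq_outside hmem hu0 (by simp [hu1]) c c'
  rcases hpv with ⟨hv1, hv2⟩ | ⟨hv1, hv2⟩
  · -- wedge at v in x: pattern 3 with (v, 0), resolving x's diamond as wedge, z's as vee
    refine ⟨hx, hz, false, true, v, 0, ne_of_gt hv, ?_, ?_⟩
    · intro u h1 h2
      exact hout false true u h1 h2
    · simp only [Function.comp_apply]
      right; right
      refine ⟨rlbl_wedge hv hv1 hv2 false, ?_, ?_, ?_⟩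
      · rw [rlbl_diam h0 false]; simp
      · exact rlbl_vee hv (hzv.2.2 hv1) (fun hc => hv2 (hzv.1.1 hc)) true
      · rw [rlbl_diam h0z true]; simp
  · -- vee at v in x: pattern 2 with (v, 0), resolving x's diamond as vee, z's as wedge
    refine ⟨hx, hz, true, false, v, 0, ne_of_gt hv, ?_, ?_⟩
    · intro u h1 h2
      exact hout true false u h1 h2
    · simp only [Function.comp_apply]
      right; left
      refine ⟨rlbl_vee hv hv1 hv2 true, ?_, ?_, ?_⟩
      · rw [rlbl_diam h0 true]; simp
      · exact rlbl_wedge hv (hzv.1.2 hv1) (fun hc => hv2 (hzv.2.1 hc)) false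
      · rw [rlbl_diam h0z false]; simp

lemma range_eq_imp {x y : ℕ → ℚ} (hx : BAplus x) (hy : BAplus y)
    (h : Set.range x = Set.range y) : x = y := by
  funext i
  set c := max (x 0) (y 0) + 1 with hc
  refine ba_agree hx hy c 0 (fun q _ => by rw [h]) ?_ ?_ i (Nat.zero_le i)
  · intro j
    refine iff_of_false ?_ (by omega)
    intro hcc
    have h1 : x j ≤ x 0 := hx.1.antitone (Nat.zero_le j)
    have h2 : x 0 ≤ max (x 0) (y 0) := le_max_left _ _
    rw [hc] at hcc
    linarith
  · intro j
    refine iff_of_false ?_ (by omega)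
    intro hcc
    have h1 : y j ≤ y 0 := hy.1.antitone (Nat.zero_le j)
    have h2 : y 0 ≤ max (x 0) (y 0) := le_max_right _ _
    rw [hc] at hcc
    linarith

lemma z_exists {x : ℕ → ℚ} (hx : BAplus x) (S : Finset ℚ) :
    ∃ z, BAplus z ∧ ∀ q, q ∈ Set.range z ↔ flip S q ∈ Set.range x := by
  obtain ⟨M, hM⟩ := S.bddAbove
  set T := flip S '' Set.range x with hT
  have hTmem : ∀ q, q ∈ T ↔ flip S q ∈ Set.range x := by
    intro q
    constructor
    · rintro ⟨r, hr, rfl⟩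
      rw [flip_invol]
      exact hr
    · intro hq
      exact ⟨flip S q, hq, flip_invol S q⟩
  have hgood : Good T := by
    constructor
    · intro c
      set c' := min c (-|M| - 1) with hc'
      have hsub : T ∩ Set.Ici c ⊆ flip S '' (Set.range x ∩ Set.Ici c') := by
        rintro q ⟨⟨r, hr, rfl⟩, hq⟩
        refine ⟨r, ⟨hr, ?_⟩, rfl⟩
        show c' ≤ r
        by_cases hm : |r| ∈ S
        · have h1 : |r| ≤ M := hM hm
          have h2 : M ≤ |M| := le_abs_self M
          have h3 : -|r| ≤ r := neg_abs_le r
          calc c' ≤ -|M| - 1 := min_le_right _ _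
          _ ≤ r := by linarith
        · rw [flip_eq_of_not_mem hm] at hq
          calc c' ≤ c := min_le_left _ _
          _ ≤ r := hq
      exact ((rg_fin hx c').image _).subset hsub
    · intro c
      obtain ⟨m, hm⟩ := ba_find hx (min c (-|M| - 1))
      have hxm : x m < min c (-|M| - 1) := by
        by_contra hcc
        push_neg at hcc
        exact absurd ((hm m).1 hcc) (lt_irrefl m)
      have hfl : flip S (x m) = x m := by
        apply flip_eq_of_not_mem
        intro hmm
        have h1 : |x m| ≤ M := hM hmm
        have h2 : M ≤ |M| := le_abs_self M
        have h3 : x m ≤ min c (-|M| - 1) := le_of_lt hxm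
        have h4 : min c (-|M| - 1) ≤ -|M| - 1 := min_le_right _ _
        have h5 : -|x m| ≤ x m := neg_abs_le (x m)
        linarith
      refine ⟨x m, (hTmem _).2 (by rw [hfl]; exact ⟨m, rfl⟩), ?_⟩
      exact lt_of_lt_of_le hxm (min_le_left _ _)
  refine ⟨enum T, ⟨enum_strictAnti hgood, ?_⟩, ?_⟩
  · rcases hx.2 with hg | hg
    · left
      intro i
      obtain ⟨r, ⟨j, rfl⟩, hfl⟩ := enum_mem hgood i
      obtain ⟨k, hk⟩ := hg j
      by_cases hm : |x j| ∈ S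
      · rw [← hfl, flip_eq_neg hm, hk]
        exact ⟨-k, by push_cast; ring⟩
      · rw [← hfl, flip_eq_of_not_mem hm, hk]
        exact ⟨k, rfl⟩
    · right
      intro i
      obtain ⟨r, ⟨j, rfl⟩, hfl⟩ := enum_mem hgood i
      obtain ⟨k, hk⟩ := hg j
      by_cases hm : |x j| ∈ S
      · rw [← hfl, flip_eq_neg hm, hk]
        exact ⟨-k - 1, by push_cast; ring⟩
      · rw [← hfl, flip_eq_of_not_mem hm, hk]
        exact ⟨k, rfl⟩
  · intro q
    rw [enum_range hgood]
    exact hTmem q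

lemma moves_aux : ∀ n : ℕ, ∀ x y : ℕ → ℚ, ∀ S : Finset ℚ, BAplus x → BAplus y →
    (∀ v ∈ S, 0 < v) →
    (∀ v ∈ S, (v ∈ Set.range x ∧ -v ∉ Set.range x) ∨ (-v ∈ Set.range x ∧ v ∉ Set.range x)) →
    (∀ q, q ∈ Set.range x ↔ flip S q ∈ Set.range y) →
    (0 ∈ Set.range x ∨ Even S.card) → S.card = n →
    Relation.ReflTransGen BMove x y := by
  intro n
  induction n using Nat.strong_induction_on with
  | _ n IH =>
    intro x y S hx hy hSpos hSpure hSflip hSpar hcard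
    by_cases hn0 : n = 0
    · -- base case: ranges are equal
      subst hn0
      have hS : S = ∅ := Finset.card_eq_zero.1 hcard
      subst hS
      have hr : Set.range x = Set.range y := by
        ext q
        rw [hSflip q, flip_eq_of_not_mem (by simp)]
      have := range_eq_imp hx hy hr
      rw [this]
    · by_cases hn1 : n = 1
      · -- single flip, must use the diamond
        subst hn1
        obtain ⟨v, hS⟩ := Finset.card_eq_one.1 hcard
        subst hS
        have h0x : 0 ∈ Set.range x := by
          rcases hSpar with h | h
          · exact h
          · rw [Finset.card_singleton] at h
            norm_num at h
        have hvS : v ∈ ({v} : Finset ℚ) := Finset.mem_singleton_self v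
        obtain ⟨z, hz, hzmem⟩ := z_exists hx ({v} : Finset ℚ)
        have hmove : BMove x z :=
          bmove_diam hx hz (hSpos v hvS) hzmem (hSpure v hvS) h0x
        have htail : Relation.ReflTransGen BMove z y := by
          apply IH 0 (by omega) z y ∅ hz hy (by simp) (by simp) ?_ (Or.inr (by simp)) rfl
          intro q
          rw [flip_eq_of_not_mem (by simp)]
          have h1 := hzmem q
          have h2 := hSflip (flip ({v} : Finset ℚ) q)
          rw [flip_invol] at h2
          rw [h1, ← h2]
        exact Relation.ReflTransGen.head hmove htail
      · -- n ≥ 2 : flip a pair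
        have hn2 : 2 ≤ n := by omega
        obtain ⟨v, hvS, w, hwS, hvw⟩ := Finset.one_lt_card.1 (by omega : 1 < S.card)
        obtain ⟨z, hz, hzmem⟩ := z_exists hx ({v, w} : Finset ℚ)
        have hmove : BMove x z :=
          bmove_pair hx hz hvw (hSpos v hvS) (hSpos w hwS) hzmem (hSpure v hvS) (hSpure w hwS)
        set S'' := (S.erase v).erase w with hS''
        have hwev : w ∈ S.erase v := Finset.mem_erase.2 ⟨fun hc => hvw hc.symm, hwS⟩
        have hcard'' : S''.card = n - 2 := by
          rw [hS'', Finset.card_erase_of_mem hwev, Finset.card_erase_of_mem hvS, hcard]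
          omega
        have hmemS'' : ∀ u : ℚ, u ∈ S'' ↔ u ≠ w ∧ u ≠ v ∧ u ∈ S := by
          intro u
          rw [hS'', Finset.mem_erase, Finset.mem_erase]
        -- transport of memberships away from v, w
        have htrans : ∀ u : ℚ, u ≠ 0 → |u| ≠ v → |u| ≠ w →
            (u ∈ Set.range z ↔ u ∈ Set.range x) := by
          intro u hu0 h1 h2
          rw [hzmem u, flip_eq_of_not_mem (by simp [h1, h2])]
        have hkey : ∀ q : ℚ, flip S (flip ({v, w} : Finset ℚ) q) = flip S'' q := by
          intro q
          by_cases hm : |q| ∈ ({v, w} : Finset ℚ)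
          · rw [flip_eq_neg hm]
            have hmS : |q| ∈ S := by
              rcases Finset.mem_insert.1 hm with h | h
              · rw [h]; exact hvS
              · rw [Finset.mem_singleton.1 h]; exact hwS
            rw [flip_eq_neg (by rwa [abs_neg]), neg_neg,
              flip_eq_of_not_mem (by
                rw [hmemS'']
                rcases Finset.mem_insert.1 hm with h | h
                · intro hc; exact hc.2.1 h
                · intro hc; exact hc.1 (Finset.mem_singleton.1 h))]
          · rw [flip_eq_of_not_mem hm]
            simp only [Finset.mem_insert, Finset.mem_singleton, not_or] at hm
            by_cases hm2 : |q| ∈ S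
            · rw [flip_eq_neg hm2, flip_eq_neg ((hmemS'' _).2 ⟨hm.2, hm.1, hm2⟩)]
            · rw [flip_eq_of_not_mem hm2,
                flip_eq_of_not_mem (fun hc => hm2 ((hmemS'' _).1 hc).2.2)]
        have htail : Relation.ReflTransGen BMove z y := by
          apply IH (n - 2) (by omega) z y S'' hz hy ?_ ?_ ?_ ?_ hcard''
          · intro u hu
            exact hSpos u ((hmemS'' u).1 hu).2.2
          · -- purity
            intro u hu
            obtain ⟨hu1, hu2, hu3⟩ := (hmemS'' u).1 hu
            have hupos := hSpos u hu3
            have e1 : u ∈ Set.range z ↔ u ∈ Set.range x :=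
              htrans u (ne_of_gt hupos) (by rwa [abs_of_pos hupos]) (by rwa [abs_of_pos hupos])
            have e2 : -u ∈ Set.range z ↔ -u ∈ Set.range x :=
              htrans (-u) (by simp [ne_of_gt hupos])
                (by rwa [abs_neg, abs_of_pos hupos]) (by rwa [abs_neg, abs_of_pos hupos])
            rcases hSpure u hu3 with ⟨p1, p2⟩ | ⟨p1, p2⟩
            · exact Or.inl ⟨e1.2 p1, fun hc => p2 (e2.1 hc)⟩
            · exact Or.inr ⟨e2.2 p1, fun hc => p2 (e1.1 hc)⟩
          · -- flip correspondence z → y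
            intro q
            rw [hzmem q, hSflip (flip ({v, w} : Finset ℚ) q), hkey q]
          · -- parity
            rcases hSpar with h | h
            · left
              rw [hzmem 0, flip_zero]
              exact h
            · right
              rw [hcard'', Nat.even_sub hn2]
              exact iff_of_true (hcard ▸ h) even_two
        exact Relation.ReflTransGen.head hmove htail

end BW

/-- Two elements of `A⁺` (Brauer setting) lie in the same `W`-orbit if and
only if one is obtained from the other by a finite sequence of elementary
moves, each swapping a `∨` and a `∧` or exchanging a pair `∨∨ ↔ ∧∧`, with `⋄`
allowed to play the role of either `∨` or `∧`. -/
theorem sameWOrbitBrauer_iff_moves (x y : ℕ → ℚ)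
    (hx : BAplus x) (hy : BAplus y) :
    SameWOrbitBrauer x y ↔ Relation.ReflTransGen BMove x y := by
  constructor
  · intro h
    obtain ⟨hx', hy', S, hSpos, hSpure, hSflip, hSpar⟩ := BW.mid_of_orbit hx hy h
    exact BW.moves_aux S.card x y S hx' hy' hSpos hSpure hSflip hSpar rfl
  · intro h
    induction h with
    | refl => exact BW.orbit_refl x
    | tail _ hstep ih =>
        exact BW.orbit_trans (ih hstep.1) (BW.orbit_of_mid (BW.mid_of_move hstep))
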